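/- Given rates r_{ij} ≥ 0 for groups i ∈ [L] and PRBs j ∈ [N] and a rate requirement R > 0, a feasible binary assignment {x_{ij}} satisfying ∑_j x_{ij} r_{ij} ≥ R for all i and ∑_i x_{ij} ≤ 1 for all j exists for the instance built from a 3-partition input (L = m, N = P, R = B, r_{ij} = ρ_j) if and only if the 3-partition instance has a solution. -/
import Mathlib


/-- The resource allocation feasibility instance built from a 3-partition
input (`L = m` groups, `N = P = 3m` items with rates `ρ_j`, requirement `R = B`) has a
feasible binary assignment if and only if the 3-partition instance has a solution. -/
theorem blp_feasible_iff_three_partition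
    (m B : ℕ) (ρ : Fin (3 * m) → ℕ)
    (hpos : ∀ k, 0 < ρ k)
    (hlb : ∀ k, (B : ℚ) / 4 < (ρ k : ℚ))
    (hub : ∀ k, (ρ k : ℚ) < (B : ℚ) / 2)
    (hsum : ∑ k, ρ k = m * B) :
    (∃ x : Fin m → Fin (3 * m) → Bool,
        (∀ i, B ≤ ∑ j, if x i j then ρ j else 0) ∧
        (∀ j, (Finset.univ.filter fun i => x i j).card ≤ 1)) ↔
    (∃ Y : Fin m → Finset (Fin (3 * m)),
        (∀ i j, i ≠ j → Disjoint (Y i) (Y j)) ∧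
        (∀ k, ∃ i, k ∈ Y i) ∧
        (∀ i, ∑ k ∈ Y i, ρ k = B) ∧
        (∀ i, (Y i).card = 3)) := by
  constructor
  · rintro ⟨x, hge, hcard⟩
    set Z : Fin m → Finset (Fin (3 * m)) :=
      fun i => Finset.univ.filter (fun j => x i j = true) with hZ
    have hdisj : ∀ i j : Fin m, i ≠ j → Disjoint (Z i) (Z j) := by
      intro i j hij
      rw [Finset.disjoint_left]
      intro k hki hkj
      simp only [hZ, Finset.mem_filter] at hki hkj
      exact hij (Finset.card_le_one.mp (hcard k) i (by simp [hki.2]) j (by simp [hkj.2]))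
    have hZsum : ∀ i, ∑ k ∈ Z i, ρ k = ∑ j, if x i j then ρ j else 0 := by
      intro i
      rw [Finset.sum_filter]
    -- total sum over biUnion
    have hU : ∑ i, ∑ k ∈ Z i, ρ k = ∑ k ∈ Finset.univ.biUnion Z, ρ k := by
      rw [Finset.sum_biUnion]
      intro i _ j _ hij
      exact hdisj i j hij
    have hUle : ∑ k ∈ Finset.univ.biUnion Z, ρ k ≤ m * B := by
      rw [← hsum]
      exact Finset.sum_le_sum_of_subset (Finset.subset_univ _)
    have hge' : ∀ i : Fin m, B ≤ ∑ k ∈ Z i, ρ k := by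
      intro i; rw [hZsum]; exact hge i
    have hgetot : (m : ℕ) * B ≤ ∑ i, ∑ k ∈ Z i, ρ k := by
      calc (m : ℕ) * B = ∑ _i : Fin m, B := by simp [mul_comm]
        _ ≤ _ := Finset.sum_le_sum (fun i _ => hge' i)
    have heqtot : ∑ i, ∑ k ∈ Z i, ρ k = m * B := le_antisymm (hU ▸ hUle) hgetot
    have heqB : ∀ i, ∑ k ∈ Z i, ρ k = B := by
      have h := (Finset.sum_eq_sum_iff_of_le (s := (Finset.univ : Finset (Fin m)))
        (f := fun _ : Fin m => B)
        (g := fun i => ∑ k ∈ Z i, ρ k) (fun i _ => hge' i)).mp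
        (by rw [heqtot]; simp [mul_comm])
      intro i; exact (h i (Finset.mem_univ i)).symm
    -- coverage
    have hsdiff : ∑ k ∈ Finset.univ \ Finset.univ.biUnion Z, ρ k = 0 := by
      have h := Finset.sum_sdiff (f := ρ) (Finset.subset_univ (Finset.univ.biUnion Z))
      have h2 : ∑ k ∈ Finset.univ.biUnion Z, ρ k = m * B := by rw [← hU]; exact heqtot
      omega
    have hcover : ∀ k, ∃ i, k ∈ Z i := by
      intro k
      by_contra hk
      push_neg at hk
      have hkm : k ∈ Finset.univ \ Finset.univ.biUnion Z := by
        simp only [Finset.mem_sdiff, Finset.mem_univ, Finset.mem_biUnion, true_and]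
        push_neg
        exact hk
      have h0 := Finset.sum_eq_zero_iff.mp hsdiff k hkm
      have := hpos k
      omega
    -- B > 0
    refine ⟨Z, hdisj, hcover, heqB, ?_⟩
    intro i
    have k0 : Fin (3 * m) := ⟨0, by have := i.pos; omega⟩
    have hB0 : (0 : ℚ) < (B : ℚ) := by
      have h1 := hlb k0; have h2 := hub k0; linarith
    have hne : (Z i).Nonempty := by
      rw [Finset.nonempty_iff_ne_empty]
      intro h
      have hB := heqB i
      rw [h, Finset.sum_empty] at hB
      have : (B : ℚ) = 0 := by exact_mod_cast hB.symm
      linarith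
    have hsq : (∑ k ∈ Z i, (ρ k : ℚ)) = (B : ℚ) := by
      rw [← Nat.cast_sum, heqB i]
    have h1 : ((Z i).card : ℚ) * ((B : ℚ) / 4) < (B : ℚ) := by
      calc ((Z i).card : ℚ) * ((B : ℚ) / 4) = ∑ _k ∈ Z i, (B : ℚ) / 4 := by
            simp [mul_comm]
        _ < ∑ k ∈ Z i, (ρ k : ℚ) := Finset.sum_lt_sum_of_nonempty hne (fun k _ => hlb k)
        _ = (B : ℚ) := hsq
    have h2 : (B : ℚ) < ((Z i).card : ℚ) * ((B : ℚ) / 2) := by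
      calc (B : ℚ) = ∑ k ∈ Z i, (ρ k : ℚ) := hsq.symm
        _ < ∑ _k ∈ Z i, (B : ℚ) / 2 := Finset.sum_lt_sum_of_nonempty hne (fun k _ => hub k)
        _ = ((Z i).card : ℚ) * ((B : ℚ) / 2) := by simp [mul_comm]
    have hlt4 : (Z i).card < 4 := by
      by_contra h
      push_neg at h
      have : (4 : ℚ) ≤ ((Z i).card : ℚ) := by exact_mod_cast h
      nlinarith
    have hgt2 : 2 < (Z i).card := by
      by_contra h
      push_neg at h
      have : ((Z i).card : ℚ) ≤ 2 := by exact_mod_cast h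
      nlinarith
    omega
  · rintro ⟨Y, hdisj, hcov, hsumB, hcard3⟩
    refine ⟨fun i j => decide (j ∈ Y i), ?_, ?_⟩
    · intro i
      have : ∑ j, (if decide (j ∈ Y i) = true then ρ j else 0) = ∑ k ∈ Y i, ρ k := by
        simp [Finset.sum_ite_mem]
      rw [this, hsumB]
    · intro j
      rw [Finset.card_le_one]
      intro a ha b hb
      simp only [Finset.mem_filter, decide_eq_true_eq] at ha hb
      by_contra hab
      exact (Finset.disjoint_left.mp (hdisj a b hab) ha.2) hb.2
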